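/- Let x ∈ (0,1) be irrational with SCF digits (a_j(x),ε_j(x))_{s_j(x)}, and set P̂_j(x) = P_j(ι(x)), Q̂_j(x) = Q_j(ι(x)) where ι(x)=(1−x)/(1+x) (with the convention P_0 = 0, Q_0 = 1). Then: (i) if s_j = e, then P̂_j = ½(ε_j(Q_{j−1}−P_{j−1}) + (Q_j−P_j)) and Q̂_j = ½(ε_j(Q_{j−1}+P_{j−1}) + (Q_j+P_j)); (ii) if s_j = o, then P_j = ½(ε_j(Q̂_{j−1}−P̂_{j−1}) + (Q̂_j−P̂_j)) and Q_j = ½(ε_j(Q̂_{j−1}+P̂_{j−1}) + (Q̂_j+P̂_j)); (iii) there exists a constant C > 1, independent of x and j, such that 1/C < Q̂_j(x)/Q_j(x) < C for all j ≥ 1. -/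

import Mathlib

open MeasureTheory Real Set Filter Topology

namespace SCF

/-- The involution `ι(x) = (1−x)/(1+x)`. -/
noncomputable def iota (x : ℝ) : ℝ := (1 - x) / (1 + x)

/-- Even continued-fraction step.  For `y ∈ (0,1/2]` one has
`⌊(1/y+1)/2⌋ = k` whenever `1/y ∈ (2k−1, 2k+1)`, so `Te y = |1/y − 2k|`;
explicitly `Te y = 1/y − 2` on `[1/3,1/2]`, `Te y = 1/y − 2k` on
`[1/(2k+1), 1/(2k))` and `Te y = 2k − 1/y` on `[1/(2k), 1/(2k−1))` (`k ≥ 2`). -/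
noncomputable def Te (y : ℝ) : ℝ := |1 / y - 2 * (⌊(1 / y + 1) / 2⌋ : ℝ)|

/-- The spliced continued fraction (SCF) map `T : [0,1] → [0,1]`, with
`T 0 = 0`, `T 1 = 1`.  On `(0,1/2]` it is the even continued fraction map
(see `Te`), and on `(1/2,1)` it is the odd–odd map, which is the conjugate
`ι ∘ Te ∘ ι` of the even map; this agrees with the branchwise definition:
`T x = (k x − (k−1))/(k − (k+1) x)` on `((k−1)/k, (2k−1)/(2k+1)]` and
`T x = (k − (k+1) x)/(k x − (k−1))` on `((2k−1)/(2k+1), k/(k+1)]` for `k ≥ 2`. -/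
noncomputable def T (x : ℝ) : ℝ :=
  if x ≤ 0 then 0
  else if 1 ≤ x then 1
  else if x ≤ 1 / 2 then Te x
  else iota (Te (iota x))

/-- Parity label of a digit: `e` (even cusp) or `o` (odd–odd cusp). -/
inductive Par | e | o
deriving DecidableEq

/-- A candidate SCF digit `(a, ε)_s`. -/
structure Digit where
  a : ℤ
  eps : ℤ
  s : Par
deriving DecidableEq

/-- The digit set `𝒜 = {(k,ε)_s : k ≥ 2, ε = ±1, s ∈ {e,o}} ∪ {(1,+1)_e}`. -/
def Digit.Valid (d : Digit) : Prop :=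
  (2 ≤ d.a ∧ (d.eps = 1 ∨ d.eps = -1)) ∨ (d.a = 1 ∧ d.eps = 1 ∧ d.s = Par.e)

/-- The branch intervals `I_{(a,ε)_s}` of the SCF map. -/
noncomputable def branch (d : Digit) : Set ℝ :=
  match d.s with
  | Par.e =>
      if d.a = 1 then Set.Icc (1/3 : ℝ) (1/2)
      else if d.eps = 1 then Set.Ico (1 / (2 * (d.a : ℝ) + 1)) (1 / (2 * (d.a : ℝ)))
      else Set.Ico (1 / (2 * (d.a : ℝ))) (1 / (2 * (d.a : ℝ) - 1))
  | Par.o =>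
      if d.eps = 1 then
        Set.Ioc ((2 * (d.a : ℝ) - 1) / (2 * (d.a : ℝ) + 1)) ((d.a : ℝ) / ((d.a : ℝ) + 1))
      else
        Set.Ioc (((d.a : ℝ) - 1) / (d.a : ℝ)) ((2 * (d.a : ℝ) - 1) / (2 * (d.a : ℝ) + 1))

open Classical in
/-- The SCF digit of a point `y` (the unique valid digit `d` with `y ∈ I_d`;
well defined for every `y ∈ (0,1)`). -/
noncomputable def digit (y : ℝ) : Digit :=
  if h : ∃ d : Digit, d.Valid ∧ y ∈ branch d then h.choose else ⟨1, 1, Par.e⟩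

/-- The `n`-th SCF digit `(a_n(x), ε_n(x))_{s_n(x)}` of `x`, `n ≥ 1`,
determined by `T^[n−1] x ∈ I_{(a_n,ε_n)_{s_n}}`. -/
noncomputable def dig (n : ℕ) (x : ℝ) : Digit := digit (T^[n - 1] x)

/-- The `n`-th SCF partial quotient `a_n(x)`. -/
noncomputable def a (n : ℕ) (x : ℝ) : ℤ := (dig n x).a

/-- The invariant density `f_μ`. -/
noncomputable def fdens (x : ℝ) : ℝ :=
  2 / (Real.log (2 + Real.sqrt 3) * (1 - (2 - Real.sqrt 3) * x) * (1 + Real.sqrt 3 * x))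

/-- The absolutely continuous `T`-invariant probability measure `μ` on `(0,1)`. -/
noncomputable def mu : Measure ℝ :=
  (volume.restrict (Set.Ioo (0 : ℝ) 1)).withDensity fun x => ENNReal.ofReal (fdens x)

/-- The inverse branches `h_{(a,ε)_s}` of the SCF map `T`. -/
noncomputable def h (d : Digit) (x : ℝ) : ℝ :=
  match d.s with
  | Par.e => 1 / (2 * (d.a : ℝ) + (d.eps : ℝ) * x)
  | Par.o =>
      if d.eps = 1 then (((d.a : ℝ) - 1) * x + (d.a : ℝ)) / ((d.a : ℝ) * x + ((d.a : ℝ) + 1))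
      else ((d.a : ℝ) * x + ((d.a : ℝ) - 1)) / (((d.a : ℝ) + 1) * x + (d.a : ℝ))

/-- Composed inverse branch `h_{A^{(n)}} = h_{A₁} ∘ ⋯ ∘ h_{A_n}` of a word. -/
noncomputable def hWord (l : List Digit) : ℝ → ℝ :=
  l.foldr (fun d g => h d ∘ g) id

/-- The dual inverse branches `bar h_{(b,η)_t}`. -/
noncomputable def hbar (d : Digit) (y : ℝ) : ℝ :=
  match d.s with
  | Par.e => (d.eps : ℝ) / (2 * (d.a : ℝ) + y)
  | Par.o =>
      1 / (1 + (d.eps : ℝ) / (((d.a : ℝ) - ((max 0 d.eps : ℤ) : ℝ)) + 1 / (1 + y)))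

/-- The matrix `M_{(a,ε)_s}` associated with the inverse branch `h_{(a,ε)_s}`. -/
noncomputable def Mdig (d : Digit) : Matrix (Fin 2) (Fin 2) ℝ :=
  match d.s with
  | Par.e => !![0, 1; (d.eps : ℝ), 2 * (d.a : ℝ)]
  | Par.o =>
      !![(d.a : ℝ) - ((max 0 d.eps : ℤ) : ℝ), (d.a : ℝ) - ((max 0 d.eps : ℤ) : ℝ) + (d.eps : ℝ);
         (d.a : ℝ) - ((max 0 d.eps : ℤ) : ℝ) + 1, (d.a : ℝ) - ((max 0 d.eps : ℤ) : ℝ) + (d.eps : ℝ) + 1]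

/-- `M_n(x) = M_{(a₁,ε₁)_{s₁}} ⋯ M_{(a_n,ε_n)_{s_n}}`. -/
noncomputable def Mn (n : ℕ) (x : ℝ) : Matrix (Fin 2) (Fin 2) ℝ :=
  ((List.range n).map fun i => Mdig (digit (T^[i] x))).prod

/-- `P_n(x)`: the `(1,2)`-entry of `M_n(x)` (numerator of the `n`-th convergent). -/
noncomputable def Pc (n : ℕ) (x : ℝ) : ℝ := Mn n x 0 1

/-- `Q_n(x)`: the `(2,2)`-entry of `M_n(x)` (denominator of the `n`-th convergent). -/
noncomputable def Qc (n : ℕ) (x : ℝ) : ℝ := Mn n x 1 1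


/-! ### Auxiliary development for Statement 8 -/

private lemma fin2_ext {A B : Matrix (Fin 2) (Fin 2) ℝ} (h00 : A 0 0 = B 0 0)
    (h01 : A 0 1 = B 0 1) (h10 : A 1 0 = B 1 0) (h11 : A 1 1 = B 1 1) : A = B := by
  ext i j; fin_cases i <;> fin_cases j <;> assumption

private lemma iota_mem_Ioo {y : ℝ} (hy : y ∈ Set.Ioo (0:ℝ) 1) : iota y ∈ Set.Ioo (0:ℝ) 1 := by
  obtain ⟨h0, h1⟩ := hy
  constructor
  · exact div_pos (by linarith) (by linarith)
  · rw [iota, div_lt_one (by linarith)]; linarith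

private lemma iota_iota {y : ℝ} (hy : -1 < y) : iota (iota y) = y := by
  have h1 : (0:ℝ) < 1 + y := by linarith
  have h2 : 1 + iota y = 2 / (1 + y) := by rw [iota]; field_simp; ring
  have h3 : 1 - iota y = 2 * y / (1 + y) := by rw [iota]; field_simp; ring
  have h4 : (2:ℝ) / (1 + y) ≠ 0 := by positivity
  rw [iota, h2, h3, div_eq_iff h4]
  field_simp

private lemma iota_irrational {y : ℝ} (hy : Irrational y) (h1 : -1 < y) :
    Irrational (iota y) := by
  have h0 : (1:ℝ) + y ≠ 0 := by linarith
  have hA : Irrational (1 + y) := by simpa using hy.intCast_add 1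
  have hB : Irrational (1 + y)⁻¹ := hA.inv
  have hC : Irrational (2 * (1 + y)⁻¹) := by
    simpa using hB.intCast_mul (by norm_num : (2:ℤ) ≠ 0)
  have hD : Irrational (-1 + 2 * (1 + y)⁻¹) := by simpa using hC.intCast_add (-1)
  have hE : iota y = -1 + 2 * (1 + y)⁻¹ := by rw [iota]; field_simp; ring
  rw [hE]; exact hD

/-- Parity swap of a digit. -/
def swapPar : Par → Par
  | Par.e => Par.o
  | Par.o => Par.e

/-- The digit of `ι y` corresponding to the digit of `y`. -/
def swap (d : Digit) : Digit := if d.a = 1 then d else ⟨d.a, d.eps, swapPar d.s⟩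

private lemma swap_valid {d : Digit} (hd : d.Valid) : (swap d).Valid := by
  rcases hd with ⟨ha, he⟩ | ⟨ha, he, hs⟩
  · have h1 : d.a ≠ 1 := by omega
    simp only [swap, h1, if_false]
    exact Or.inl ⟨ha, he⟩
  · simp only [swap, ha, if_pos]
    exact Or.inr ⟨ha, he, hs⟩

private lemma swap_of_o {d : Digit} (hd : d.Valid) (hs : d.s = Par.o) :
    (swap d).s = Par.e ∧ (swap d).eps = d.eps := by
  have ha : 2 ≤ d.a := by
    rcases hd with ⟨ha, -⟩ | ⟨-, -, hse⟩
    · exact ha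
    · rw [hs] at hse; exact absurd hse (by simp)
  have h1 : d.a ≠ 1 := by omega
  simp [swap, h1, hs, swapPar]

/-- The conjugating matrix `N` with `N² = 2·1`. -/
noncomputable def Nmat : Matrix (Fin 2) (Fin 2) ℝ := !![-1, 1; 1, 1]

private lemma Nmat_conj {d : Digit} (hd : d.Valid) :
    Nmat * Mdig d = Mdig (swap d) * Nmat := by
  obtain ⟨a, eps, s⟩ := d
  rcases hd with ⟨ha, he⟩ | ⟨ha, he, hs⟩
  · have ha2 : (2:ℤ) ≤ a := ha
    have h1 : a ≠ 1 := by omega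
    have he' : eps = 1 ∨ eps = -1 := he
    rcases he' with rfl | rfl <;> cases s <;>
      · simp only [swap, h1, if_false, swapPar, Mdig, Nmat]
        refine fin2_ext ?_ ?_ ?_ ?_ <;>
          simp [Matrix.mul_apply, Fin.sum_univ_two] <;> push_cast <;> ring
  · have ha' : a = 1 := ha
    have he' : eps = 1 := he
    have hs' : s = Par.e := hs
    subst ha'; subst he'; subst hs'
    simp only [swap, if_pos rfl, Mdig, Nmat]
    refine fin2_ext ?_ ?_ ?_ ?_ <;>
      simp [Matrix.mul_apply, Fin.sum_univ_two] <;> push_cast <;> ring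

private lemma iota_mem_branch {d : Digit} (hd : d.Valid) {y : ℝ}
    (hm : y ∈ Set.Ioo (0:ℝ) 1) (hb : y ∈ branch d) : iota y ∈ branch (swap d) := by
  obtain ⟨h0, h1⟩ := hm
  have hden : (0:ℝ) < 1 + y := by linarith
  obtain ⟨a, eps, s⟩ := d
  rcases hd with ⟨ha, he⟩ | ⟨ha, he, hs⟩
  · have ha2 : (2:ℤ) ≤ a := ha
    have h1a : a ≠ 1 := by omega
    have haR : (2:ℝ) ≤ (a:ℝ) := by exact_mod_cast ha2
    have he' : eps = 1 ∨ eps = -1 := he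
    have hne : ¬((-1:ℤ) = 1) := by norm_num
    rcases he' with rfl | rfl
    · cases s
      · -- (a,1)_e → (a,1)_o
        simp only [branch, swap, swapPar, h1a, if_false, if_pos rfl, Set.mem_Ico,
          Set.mem_Ioc] at hb ⊢
        obtain ⟨hbl, hbu⟩ := hb
        rw [div_le_iff₀ (by linarith : (0:ℝ) < 2*(a:ℝ)+1)] at hbl
        rw [lt_div_iff₀ (by linarith : (0:ℝ) < 2*(a:ℝ))] at hbu
        constructor
        · rw [iota, div_lt_div_iff₀ (by linarith : (0:ℝ) < 2*(a:ℝ)+1) hden]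
          nlinarith
        · rw [iota, div_le_div_iff₀ hden (by linarith : (0:ℝ) < (a:ℝ)+1)]
          nlinarith
      · -- (a,1)_o → (a,1)_e
        simp only [branch, swap, swapPar, h1a, if_false, if_pos rfl, Set.mem_Ico,
          Set.mem_Ioc] at hb ⊢
        obtain ⟨hbl, hbu⟩ := hb
        rw [div_lt_iff₀ (by linarith : (0:ℝ) < 2*(a:ℝ)+1)] at hbl
        rw [le_div_iff₀ (by linarith : (0:ℝ) < (a:ℝ)+1)] at hbu
        constructor
        · rw [iota, div_le_div_iff₀ (by linarith : (0:ℝ) < 2*(a:ℝ)+1) hden]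
          nlinarith
        · rw [iota, div_lt_div_iff₀ hden (by linarith : (0:ℝ) < 2*(a:ℝ))]
          nlinarith
    · cases s
      · -- (a,-1)_e → (a,-1)_o
        simp only [branch, swap, swapPar, h1a, if_false, if_neg hne, Set.mem_Ico,
          Set.mem_Ioc] at hb ⊢
        obtain ⟨hbl, hbu⟩ := hb
        rw [div_le_iff₀ (by linarith : (0:ℝ) < 2*(a:ℝ))] at hbl
        rw [lt_div_iff₀ (by linarith : (0:ℝ) < 2*(a:ℝ)-1)] at hbu
        constructor
        · rw [iota, div_lt_div_iff₀ (by linarith : (0:ℝ) < (a:ℝ)) hden]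
          nlinarith
        · rw [iota, div_le_div_iff₀ hden (by linarith : (0:ℝ) < 2*(a:ℝ)+1)]
          nlinarith
      · -- (a,-1)_o → (a,-1)_e
        simp only [branch, swap, swapPar, h1a, if_false, if_neg hne, Set.mem_Ico,
          Set.mem_Ioc] at hb ⊢
        obtain ⟨hbl, hbu⟩ := hb
        rw [div_lt_iff₀ (by linarith : (0:ℝ) < (a:ℝ))] at hbl
        rw [le_div_iff₀ (by linarith : (0:ℝ) < 2*(a:ℝ)+1)] at hbu
        constructor
        · rw [iota, div_le_div_iff₀ (by linarith : (0:ℝ) < 2*(a:ℝ)) hden]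
          nlinarith
        · rw [iota, div_lt_div_iff₀ hden (by linarith : (0:ℝ) < 2*(a:ℝ)-1)]
          nlinarith
  · -- (1,1)_e → itself
    have ha' : a = 1 := ha
    have he2 : eps = 1 := he
    have hs' : s = Par.e := hs
    subst ha'; subst he2; subst hs'
    simp only [branch, swap, if_pos rfl, Set.mem_Icc] at hb ⊢
    obtain ⟨hbl, hbu⟩ := hb
    constructor
    · rw [iota, le_div_iff₀ hden]; linarith
    · rw [iota, div_le_iff₀ hden]; linarith

/-- window facts for even digits -/
private lemma window_e {d : Digit} (hd : d.Valid) (hs : d.s = Par.e) {y : ℝ}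
    (hb : y ∈ branch d) :
    0 < y ∧ y ≤ 1/2 ∧ 1 ≤ y*(2*(d.a:ℝ)+1) ∧ y*(2*(d.a:ℝ)-1) < 1 ∧
      (2 ≤ d.a → ((d.eps = 1 → y*(2*(d.a:ℝ)) < 1) ∧ (d.eps = -1 → 1 ≤ y*(2*(d.a:ℝ))))) := by
  obtain ⟨a, eps, s⟩ := d
  have hs' : s = Par.e := hs
  subst hs'
  have hne : ¬((-1:ℤ) = 1) := by norm_num
  rcases hd with ⟨ha, he⟩ | ⟨ha, he, -⟩
  · have ha2 : (2:ℤ) ≤ a := ha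
    have h1a : a ≠ 1 := by omega
    have haR : (2:ℝ) ≤ (a:ℝ) := by exact_mod_cast ha2
    have he' : eps = 1 ∨ eps = -1 := he
    rcases he' with rfl | rfl
    · simp only [branch, h1a, if_false, if_pos rfl, Set.mem_Ico] at hb
      obtain ⟨hl, hu⟩ := hb
      rw [div_le_iff₀ (by linarith : (0:ℝ) < 2*(a:ℝ)+1)] at hl
      rw [lt_div_iff₀ (by linarith : (0:ℝ) < 2*(a:ℝ))] at hu
      refine ⟨by nlinarith, by nlinarith, hl, by nlinarith, fun _ => ⟨fun _ => hu, ?_⟩⟩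
      intro hcon; exact absurd hcon (by norm_num)
    · simp only [branch, h1a, if_false, if_neg hne, Set.mem_Ico] at hb
      obtain ⟨hl, hu⟩ := hb
      rw [div_le_iff₀ (by linarith : (0:ℝ) < 2*(a:ℝ))] at hl
      rw [lt_div_iff₀ (by linarith : (0:ℝ) < 2*(a:ℝ)-1)] at hu
      refine ⟨by nlinarith, by nlinarith, by nlinarith, hu, fun _ => ⟨?_, fun _ => hl⟩⟩
      intro hcon; exact absurd hcon (by norm_num)
  · have ha' : a = 1 := ha
    have he2 : eps = 1 := he
    subst ha'; subst he2
    simp only [branch, if_pos rfl, Set.mem_Icc] at hb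
    obtain ⟨hl, hu⟩ := hb
    push_cast
    refine ⟨by linarith, hu, by nlinarith, by nlinarith, fun hcon => absurd hcon (by norm_num)⟩

/-- window facts for odd digits -/
private lemma window_o {d : Digit} (hd : d.Valid) (hs : d.s = Par.o) {y : ℝ}
    (hb : y ∈ branch d) :
    1/2 < y ∧ y < 1 ∧ y ≤ (d.a:ℝ)*(1-y) ∧ (d.a:ℝ)*(1-y) < 1 ∧
      (d.eps = 1 → 2*(d.a:ℝ)-1 < y*(2*(d.a:ℝ)+1)) ∧
      (d.eps = -1 → y*(2*(d.a:ℝ)+1) ≤ 2*(d.a:ℝ)-1) := by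
  obtain ⟨a, eps, s⟩ := d
  have hs' : s = Par.o := hs
  subst hs'
  have hne : ¬((-1:ℤ) = 1) := by norm_num
  have ha : 2 ≤ a := by
    rcases hd with ⟨ha, -⟩ | ⟨-, -, hse⟩
    · exact ha
    · exact absurd hse (by simp)
  have haR : (2:ℝ) ≤ (a:ℝ) := by exact_mod_cast ha
  have he : eps = 1 ∨ eps = -1 := by
    rcases hd with ⟨-, he⟩ | ⟨-, he, -⟩
    · exact he
    · exact Or.inl he
  rcases he with rfl | rfl
  · simp only [branch, if_pos rfl, Set.mem_Ioc] at hb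
    obtain ⟨hl, hu⟩ := hb
    rw [div_lt_iff₀ (by linarith : (0:ℝ) < 2*(a:ℝ)+1)] at hl
    rw [le_div_iff₀ (by linarith : (0:ℝ) < (a:ℝ)+1)] at hu
    refine ⟨by nlinarith, by nlinarith, by nlinarith, by nlinarith, fun _ => hl, ?_⟩
    intro hcon; exact absurd hcon (by norm_num)
  · simp only [branch, if_neg hne, Set.mem_Ioc] at hb
    obtain ⟨hl, hu⟩ := hb
    rw [div_lt_iff₀ (by linarith : (0:ℝ) < (a:ℝ))] at hl
    rw [le_div_iff₀ (by linarith : (0:ℝ) < 2*(a:ℝ)+1)] at hu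
    refine ⟨by nlinarith, by nlinarith, by nlinarith, by nlinarith, ?_, fun _ => hu⟩
    intro hcon; exact absurd hcon (by norm_num)

private lemma branch_unique {y : ℝ} {d d' : Digit} (hd : d.Valid) (hd' : d'.Valid)
    (hb : y ∈ branch d) (hb' : y ∈ branch d') : d = d' := by
  have hcases : ∀ e : Digit, e.s = Par.e ∨ e.s = Par.o := by
    intro e; cases he : e.s
    · exact Or.inl rfl
    · exact Or.inr rfl
  rcases hcases d with hs | hs <;> rcases hcases d' with hs' | hs'
  · -- both even
    obtain ⟨h0, h2, hw1, hw2, hw3⟩ := window_e hd hs hb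
    obtain ⟨-, -, hw1', hw2', hw3'⟩ := window_e hd' hs' hb'
    have haa : d.a = d'.a := by
      have c1 : y*(2*(d'.a:ℝ)-1) < y*(2*(d.a:ℝ)+1) := lt_of_lt_of_le hw2' hw1
      have c2 : y*(2*(d.a:ℝ)-1) < y*(2*(d'.a:ℝ)+1) := lt_of_lt_of_le hw2 hw1'
      have c1' : 2*(d'.a:ℝ)-1 < 2*(d.a:ℝ)+1 := (mul_lt_mul_iff_right₀ h0).mp c1
      have c2' : 2*(d.a:ℝ)-1 < 2*(d'.a:ℝ)+1 := (mul_lt_mul_iff_right₀ h0).mp c2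
      have i1 : (d'.a:ℝ) < (d.a:ℝ) + 1 := by linarith
      have i2 : (d.a:ℝ) < (d'.a:ℝ) + 1 := by linarith
      have i1' : d'.a < d.a + 1 := by exact_mod_cast i1
      have i2' : d.a < d'.a + 1 := by exact_mod_cast i2
      omega
    have heps : d.eps = d'.eps := by
      rcases (by rcases hd with ⟨h, -⟩ | ⟨h, -, -⟩ <;> omega : 2 ≤ d.a ∨ d.a = 1) with h2a | h1a
      · have h2a' : 2 ≤ d'.a := haa ▸ h2a
        obtain ⟨he1, he2⟩ := hw3 h2a
        obtain ⟨he1', he2'⟩ := hw3' h2a'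
        have hev : d.eps = 1 ∨ d.eps = -1 := by
          rcases hd with ⟨-, h⟩ | ⟨-, h, -⟩; exact h; exact Or.inl h
        have hev' : d'.eps = 1 ∨ d'.eps = -1 := by
          rcases hd' with ⟨-, h⟩ | ⟨-, h, -⟩; exact h; exact Or.inl h
        rcases hev with h | h <;> rcases hev' with h' | h' <;> rw [h, h']
        · exfalso
          have A := he1 h
          have B := he2' h'
          rw [← haa] at B
          linarith
        · exfalso
          have A := he2 h
          have B := he1' h'
          rw [← haa] at B
          linarith
      · have hde : d.eps = 1 := by
          rcases hd with ⟨h, -⟩ | ⟨-, h, -⟩; omega; exact h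
        have hde' : d'.eps = 1 := by
          rcases hd' with ⟨h, -⟩ | ⟨-, h, -⟩; omega; exact h
        rw [hde, hde']
    cases d; cases d'
    simp_all
  · exfalso
    have h2 := (window_e hd hs hb).2.1
    have h2' := (window_o hd' hs' hb').1
    linarith
  · exfalso
    have h2 := (window_o hd hs hb).1
    have h2' := (window_e hd' hs' hb').2.1
    linarith
  · -- both odd
    obtain ⟨h5, h6, hw1, hw2, hw3, hw4⟩ := window_o hd hs hb
    obtain ⟨-, -, hw1', hw2', hw3', hw4'⟩ := window_o hd' hs' hb'
    have hz : (0:ℝ) < 1 - y := by linarith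
    have haa : d.a = d'.a := by
      by_contra hne
      rcases (by omega : d.a + 1 ≤ d'.a ∨ d'.a + 1 ≤ d.a) with hlt | hlt
      · have : ((d.a:ℝ) + 1) * (1-y) ≤ (d'.a:ℝ) * (1-y) := by
          apply mul_le_mul_of_nonneg_right _ hz.le
          exact_mod_cast hlt
        nlinarith
      · have : ((d'.a:ℝ) + 1) * (1-y) ≤ (d.a:ℝ) * (1-y) := by
          apply mul_le_mul_of_nonneg_right _ hz.le
          exact_mod_cast hlt
        nlinarith
    have heps : d.eps = d'.eps := by
      have hev : d.eps = 1 ∨ d.eps = -1 := by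
        rcases hd with ⟨-, h⟩ | ⟨-, h, -⟩; exact h; exact Or.inl h
      have hev' : d'.eps = 1 ∨ d'.eps = -1 := by
        rcases hd' with ⟨-, h⟩ | ⟨-, h, -⟩; exact h; exact Or.inl h
      rcases hev with h | h <;> rcases hev' with h' | h' <;> rw [h, h']
      · exfalso
        have A := hw3 h
        have B := hw4' h'
        rw [← haa] at B
        linarith
      · exfalso
        have A := hw4 h
        have B := hw3' h'
        rw [← haa] at B
        linarith
    cases d; cases d'
    simp_all

private lemma exists_digit_low {y : ℝ} (hy : Irrational y) (h0 : 0 < y) (h2 : y ≤ 1/2) :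
    ∃ d : Digit, d.Valid ∧ y ∈ branch d := by
  rcases lt_or_ge y (1/3) with h3 | h3
  · -- y < 1/3 : even digit with a ≥ 2
    have h1y : Irrational (1/y) := by simpa [one_div] using hy.inv
    set k : ℤ := ⌊(1/y + 1)/2⌋ with hk
    have hy3 : 3 < 1/y := by rw [lt_div_iff₀ h0]; linarith
    have hfl : (k:ℝ) ≤ (1/y+1)/2 := Int.floor_le _
    have hfu : (1/y+1)/2 < (k:ℝ) + 1 := Int.lt_floor_add_one _
    have hk2 : 2 ≤ k := by
      have hh : (1:ℝ) < (k:ℝ) := by linarith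
      exact_mod_cast (by exact_mod_cast hh : (1:ℤ) < k)
    have hk2R : (2:ℝ) ≤ (k:ℝ) := by exact_mod_cast hk2
    have hk1 : k ≠ 1 := by omega
    have hne : ¬((-1:ℤ) = 1) := by norm_num
    have hne1 : 1/y ≠ 2*(k:ℝ)-1 := by
      have := h1y.ne_int (2*k-1)
      intro hcon; apply this; rw [hcon]; push_cast; ring
    have hne2 : 1/y ≠ 2*(k:ℝ) := by
      have := h1y.ne_int (2*k)
      intro hcon; apply this; rw [hcon]; push_cast; ring
    have hl : 2*(k:ℝ) - 1 < 1/y := lt_of_le_of_ne (by linarith) (Ne.symm hne1)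
    have hu : 1/y < 2*(k:ℝ) + 1 := by linarith
    rcases lt_or_gt_of_ne hne2 with hlt | hgt
    · -- 1/y < 2k : digit (k,-1)_e
      refine ⟨⟨k, -1, Par.e⟩, Or.inl ⟨hk2, Or.inr rfl⟩, ?_⟩
      simp only [branch, hk1, if_false, if_neg hne, Set.mem_Ico]
      have hA : 1 < y * (2*(k:ℝ)) := by
        have := (div_lt_iff₀ h0).mp hlt
        linarith
      have hB : y * (2*(k:ℝ)-1) < 1 := by
        have := (lt_div_iff₀ h0).mp hl
        linarith
      constructor
      · rw [div_le_iff₀ (by linarith : (0:ℝ) < 2*(k:ℝ))]; linarith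
      · rw [lt_div_iff₀ (by linarith : (0:ℝ) < 2*(k:ℝ)-1)]; linarith
    · -- 2k < 1/y : digit (k,1)_e
      refine ⟨⟨k, 1, Par.e⟩, Or.inl ⟨hk2, Or.inl rfl⟩, ?_⟩
      simp only [branch, hk1, if_false, if_pos rfl, Set.mem_Ico]
      have hA : 1 < y * (2*(k:ℝ)+1) := by
        have := (div_lt_iff₀ h0).mp hu
        linarith
      have hB : y * (2*(k:ℝ)) < 1 := by
        have := (lt_div_iff₀ h0).mp hgt
        linarith
      constructor
      · rw [div_le_iff₀ (by linarith : (0:ℝ) < 2*(k:ℝ)+1)]; linarith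
      · rw [lt_div_iff₀ (by linarith : (0:ℝ) < 2*(k:ℝ))]; linarith
  · -- 1/3 ≤ y ≤ 1/2 : digit (1,1)_e
    exact ⟨⟨1, 1, Par.e⟩, Or.inr ⟨rfl, rfl, rfl⟩, by
      simp only [branch, if_pos rfl, Set.mem_Icc]; exact ⟨h3, h2⟩⟩

private lemma exists_digit_all {y : ℝ} (hy : Irrational y) (hm : y ∈ Set.Ioo (0:ℝ) 1) :
    ∃ d : Digit, d.Valid ∧ y ∈ branch d := by
  obtain ⟨h0, h1⟩ := hm
  rcases le_or_gt y (1/2) with hc | hc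
  · exact exists_digit_low hy h0 hc
  · have hz : iota y ∈ Set.Ioo (0:ℝ) 1 := iota_mem_Ioo ⟨h0, h1⟩
    have hzi : Irrational (iota y) := iota_irrational hy (by linarith)
    have hz2 : iota y ≤ 1/2 := by
      rw [iota, div_le_iff₀ (by linarith : (0:ℝ) < 1 + y)]; linarith
    obtain ⟨d, hd, hmem⟩ := exists_digit_low hzi hz.1 hz2
    refine ⟨swap d, swap_valid hd, ?_⟩
    have hmb := iota_mem_branch hd hz hmem
    rwa [iota_iota (by linarith : (-1:ℝ) < y)] at hmb

private lemma digit_spec {y : ℝ} (hy : Irrational y) (hm : y ∈ Set.Ioo (0:ℝ) 1) :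
    (digit y).Valid ∧ y ∈ branch (digit y) := by
  have hex := exists_digit_all hy hm
  rw [digit, dif_pos hex]
  exact hex.choose_spec

private lemma digit_iota {y : ℝ} (hy : Irrational y) (hm : y ∈ Set.Ioo (0:ℝ) 1) :
    digit (iota y) = swap (digit y) := by
  obtain ⟨hv, hb⟩ := digit_spec hy hm
  have him := iota_mem_Ioo hm
  have hii : Irrational (iota y) := iota_irrational hy (by linarith [hm.1])
  obtain ⟨hv', hb'⟩ := digit_spec hii him
  exact branch_unique hv' (swap_valid hv) hb' (iota_mem_branch hv hm hb)

/-! ### Properties of `T` -/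

private lemma T_of_le {y : ℝ} (h0 : 0 < y) (h2 : y ≤ 1/2) : T y = Te y := by
  rw [T, if_neg (by linarith), if_neg (by linarith), if_pos h2]

private lemma T_of_gt {y : ℝ} (h2 : 1/2 < y) (h1 : y < 1) : T y = iota (Te (iota y)) := by
  rw [T, if_neg (by linarith), if_neg (by linarith), if_neg (by linarith)]

private lemma Te_good {y : ℝ} (hy : Irrational y) (h0 : 0 < y) (h2 : y < 1/2) :
    Irrational (Te y) ∧ Te y ∈ Set.Ioo (0:ℝ) 1 := by
  have h1y : Irrational (1/y) := by simpa [one_div] using hy.inv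
  set k : ℤ := ⌊(1 / y + 1) / 2⌋ with hk
  have hy2 : 2 < 1/y := by rw [lt_div_iff₀ h0]; linarith
  have hfl : (k:ℝ) ≤ (1/y+1)/2 := Int.floor_le _
  have hfu : (1/y+1)/2 < (k:ℝ) + 1 := Int.lt_floor_add_one _
  have hne1 : 1/y ≠ 2*(k:ℝ)-1 := by
    have := h1y.ne_int (2*k-1)
    intro hcon; apply this; rw [hcon]; push_cast; ring
  have hne2 : 1/y ≠ 2*(k:ℝ) := by
    have := h1y.ne_int (2*k)
    intro hcon; apply this; rw [hcon]; push_cast; ring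
  have hl : 2*(k:ℝ) - 1 < 1/y := lt_of_le_of_ne (by linarith) (Ne.symm hne1)
  have hu : 1/y < 2*(k:ℝ) + 1 := by linarith
  have hTe : Te y = |1/y - 2*(k:ℝ)| := by rw [Te]
  have hirr2 : Irrational (1/y - 2*(k:ℝ)) := by
    have := h1y.sub_intCast (2*k)
    convert this using 2
    push_cast; ring
  constructor
  · rw [hTe]
    rcases abs_choice (1/y - 2*(k:ℝ)) with hab | hab <;> rw [hab]
    · exact hirr2
    · exact hirr2.neg
  · constructor
    · rw [hTe]
      exact abs_pos.mpr (sub_ne_zero.mpr hne2)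
    · rw [hTe, abs_lt]
      constructor <;> linarith

private lemma Te_eval {z : ℝ} (h1 : 1/3 < z) (h2 : z < 1/2) : Te z = 1/z - 2 := by
  have hz0 : (0:ℝ) < z := by linarith
  have h2z : 2 < 1/z := by rw [lt_div_iff₀ hz0]; linarith
  have h3z : 1/z < 3 := by rw [div_lt_iff₀ hz0]; linarith
  have hfl : ⌊(1/z + 1)/2⌋ = 1 := by
    rw [Int.floor_eq_iff]
    constructor <;> push_cast <;> linarith
  rw [Te, hfl]
  rw [abs_of_pos (by push_cast; linarith)]
  push_cast; ring

private lemma irr_ne_rat {y : ℝ} (hy : Irrational y) (q : ℚ) : y ≠ (q:ℝ) :=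
  fun hcon => hy ⟨q, hcon.symm⟩

private lemma T_good {y : ℝ} (hy : Irrational y) (hm : y ∈ Set.Ioo (0:ℝ) 1) :
    Irrational (T y) ∧ T y ∈ Set.Ioo (0:ℝ) 1 := by
  obtain ⟨h0, h1⟩ := hm
  have h12 : y ≠ 1/2 := by
    have := irr_ne_rat hy (1/2); intro hcon; apply this; rw [hcon]; norm_num
  rcases lt_or_gt_of_ne h12 with hc | hc
  · rw [T_of_le h0 hc.le]
    exact Te_good hy h0 hc
  · rw [T_of_gt hc h1]
    have hι : iota y ∈ Set.Ioo (0:ℝ) 1 := iota_mem_Ioo ⟨h0, h1⟩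
    have hιi : Irrational (iota y) := iota_irrational hy (by linarith)
    have hιlt : iota y < 1/2 := by
      rw [iota, div_lt_iff₀ (by linarith : (0:ℝ) < 1 + y)]; linarith
    obtain ⟨hTi, hTm⟩ := Te_good hιi hι.1 hιlt
    exact ⟨iota_irrational hTi (by linarith [hTm.1]), iota_mem_Ioo hTm⟩

private lemma T_iota {y : ℝ} (hy : Irrational y) (hm : y ∈ Set.Ioo (0:ℝ) 1) :
    T (iota y) = iota (T y) := by
  obtain ⟨h0, h1⟩ := hm
  have hden : (0:ℝ) < 1 + y := by linarith
  have h12 : y ≠ 1/2 := by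
    have := irr_ne_rat hy (1/2); intro hcon; apply this; rw [hcon]; norm_num
  have h13 : y ≠ 1/3 := by
    have := irr_ne_rat hy (1/3); intro hcon; apply this; rw [hcon]; norm_num
  rcases lt_or_gt_of_ne h13 with hc3 | hc3
  · -- y < 1/3, so iota y > 1/2
    have hgt : 1/2 < iota y := by
      rw [iota, lt_div_iff₀ hden]; linarith
    rw [T_of_gt hgt (iota_mem_Ioo ⟨h0, h1⟩).2, iota_iota (by linarith : (-1:ℝ) < y),
      T_of_le h0 (by linarith)]
  · rcases lt_or_gt_of_ne h12 with hc2 | hc2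
    · -- 1/3 < y < 1/2 : both in the middle interval
      have hιm : iota y ∈ Set.Ioo (0:ℝ) 1 := iota_mem_Ioo ⟨h0, h1⟩
      have hιle : iota y ≤ 1/2 := by
        rw [iota, div_le_iff₀ hden]; linarith
      have hιgt : 1/3 < iota y := by
        rw [iota, lt_div_iff₀ hden]; linarith
      have hιlt : iota y < 1/2 := by
        rw [iota, div_lt_iff₀ hden]; linarith
      rw [T_of_le hιm.1 hιle, T_of_le h0 hc2.le, Te_eval hc3 hc2, Te_eval hιgt hιlt]
      have hy0 : y ≠ 0 := by linarith
      have h1y : (1:ℝ) - y ≠ 0 := by linarith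
      have e1 : 1/(iota y) - 2 = (3*y - 1)/(1 - y) := by
        rw [iota, one_div_div, div_sub' h1y]
        congr 1
        ring
      have e2 : iota (1/y - 2) = (3*y - 1)/(1 - y) := by
        rw [iota]
        have d1 : 1 - (1/y - 2) = (3*y - 1)/y := by field_simp; ring
        have d2 : 1 + (1/y - 2) = (1 - y)/y := by field_simp; ring
        rw [d1, d2, div_div_div_cancel_right₀ hy0]
      rw [e1, e2]
    · -- y > 1/2
      have hιm : iota y ∈ Set.Ioo (0:ℝ) 1 := iota_mem_Ioo ⟨h0, h1⟩
      have hιlt : iota y < 1/2 := by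
        rw [iota, div_lt_iff₀ hden]; linarith
      have hTn : (0:ℝ) ≤ Te (iota y) := by rw [Te]; positivity
      rw [T_of_le hιm.1 hιlt.le, T_of_gt hc2 h1, iota_iota (by linarith : (-1:ℝ) < Te (iota y))]

private lemma iter_good {x : ℝ} (hx : Irrational x) (hm : x ∈ Set.Ioo (0:ℝ) 1) (n : ℕ) :
    Irrational (T^[n] x) ∧ T^[n] x ∈ Set.Ioo (0:ℝ) 1 := by
  induction n with
  | zero => exact ⟨hx, hm⟩
  | succ n ih =>
      rw [Function.iterate_succ_apply']
      exact T_good ih.1 ih.2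

private lemma iter_iota {x : ℝ} (hx : Irrational x) (hm : x ∈ Set.Ioo (0:ℝ) 1) (n : ℕ) :
    T^[n] (iota x) = iota (T^[n] x) := by
  induction n with
  | zero => simp
  | succ n ih =>
      rw [Function.iterate_succ_apply', Function.iterate_succ_apply', ih,
        T_iota (iter_good hx hm n).1 (iter_good hx hm n).2]

private lemma Mn_succ (n : ℕ) (x : ℝ) :
    Mn (n+1) x = Mn n x * Mdig (digit (T^[n] x)) := by
  rw [Mn, Mn, List.range_succ, List.map_append, List.prod_append]
  simp

private lemma Mn_conj {x : ℝ} (hx : Irrational x) (hm : x ∈ Set.Ioo (0:ℝ) 1) (n : ℕ) :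
    Nmat * Mn n x = Mn n (iota x) * Nmat := by
  induction n with
  | zero => simp [Mn]
  | succ n ih =>
      have hg := iter_good hx hm n
      rw [Mn_succ, Mn_succ, ← mul_assoc, ih, iter_iota hx hm n, digit_iota hg.1 hg.2,
        mul_assoc, Nmat_conj (digit_spec hg.1 hg.2).1, ← mul_assoc]

/-- Column-0 extraction for an even digit. -/
private lemma col0_e {M : Matrix (Fin 2) (Fin 2) ℝ} {d : Digit} (hd : d.s = Par.e)
    (i : Fin 2) : (M * Mdig d) i 0 = (d.eps:ℝ) * M i 1 := by
  obtain ⟨a, eps, s⟩ := d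
  have hs' : s = Par.e := hd
  subst hs'
  simp [Mdig, Matrix.mul_apply, Fin.sum_univ_two, mul_comm]

/-! ### Row invariant machinery -/

private def act (v : ℝ × ℝ) (M : Matrix (Fin 2) (Fin 2) ℝ) : ℝ × ℝ :=
  (v.1 * M 0 0 + v.2 * M 1 0, v.1 * M 0 1 + v.2 * M 1 1)

private def inv2 (v : ℝ × ℝ) : Prop := 0 < v.2 ∧ -v.2 ≤ v.1 ∧ v.1 ≤ 2 * v.2

private lemma act_one (v : ℝ × ℝ) : act v 1 = v := by
  simp [act, Matrix.one_apply]

private lemma act_mul (v : ℝ × ℝ) (M M' : Matrix (Fin 2) (Fin 2) ℝ) :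
    act v (M * M') = act (act v M) M' := by
  rw [Prod.ext_iff]
  constructor <;>
    · simp [act, Matrix.mul_apply, Fin.sum_univ_two]
      ring

private lemma inv2_step {v : ℝ × ℝ} {d : Digit} (hd : d.Valid) (hv : inv2 v) :
    inv2 (act v (Mdig d)) := by
  obtain ⟨h2, hl, hu⟩ := hv
  obtain ⟨a, eps, s⟩ := d
  rcases hd with ⟨ha, he⟩ | ⟨ha, he, hs⟩
  · have ha2 : (2:ℤ) ≤ a := ha
    have haR : (2:ℝ) ≤ (a:ℝ) := by exact_mod_cast ha2
    have he' : eps = 1 ∨ eps = -1 := he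
    rcases he' with rfl | rfl <;> cases s <;>
      · refine ⟨?_, ?_, ?_⟩ <;>
          simp [act, inv2, Mdig, Matrix.mul_apply, Fin.sum_univ_two] <;>
          push_cast <;>
          nlinarith [mul_nonneg (by linarith : (0:ℝ) ≤ (a:ℝ)-1) (by linarith : (0:ℝ) ≤ v.1 + v.2),
            mul_nonneg (by linarith : (0:ℝ) ≤ (a:ℝ)-2) (by linarith : (0:ℝ) ≤ v.1 + v.2),
            mul_nonneg (by linarith : (0:ℝ) ≤ (a:ℝ)-1) (by linarith : (0:ℝ) ≤ 2*v.2 - v.1),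
            mul_nonneg (by linarith : (0:ℝ) ≤ (a:ℝ)-2) (by linarith : (0:ℝ) ≤ 2*v.2 - v.1),
            mul_pos (by linarith : (0:ℝ) < (a:ℝ)) h2,
            mul_nonneg (by linarith : (0:ℝ) ≤ (a:ℝ)-1) h2.le]
  · have ha' : a = 1 := ha
    have he2 : eps = 1 := he
    have hs2 : s = Par.e := hs
    subst ha'; subst he2; subst hs2
    refine ⟨?_, ?_, ?_⟩ <;>
      simp [act, inv2, Mdig, Matrix.mul_apply, Fin.sum_univ_two] <;>
      push_cast <;> nlinarith

private lemma inv2_prod (L : List Digit) (hL : ∀ d ∈ L, d.Valid) {v : ℝ × ℝ}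
    (hv : inv2 v) : inv2 (act v (L.map Mdig).prod) := by
  induction L generalizing v with
  | nil => simpa [act_one] using hv
  | cons d L ih =>
      rw [List.map_cons, List.prod_cons, act_mul]
      exact ih (fun e he => hL e (List.mem_cons_of_mem _ he))
        (inv2_step (hL d List.mem_cons_self) hv)

private lemma inv2_Mn {x : ℝ} (hx : Irrational x) (hm : x ∈ Set.Ioo (0:ℝ) 1) (n : ℕ)
    {v : ℝ × ℝ} (hv : inv2 v) : inv2 (act v (Mn n x)) := by
  have hMn : Mn n x = (((List.range n).map fun i => digit (T^[i] x)).map Mdig).prod := by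
    rw [List.map_map]; rfl
  rw [hMn]
  apply inv2_prod _ _ hv
  intro d hdm
  simp only [List.mem_map, List.mem_range] at hdm
  obtain ⟨i, -, rfl⟩ := hdm
  exact (digit_spec (iter_good hx hm i).1 (iter_good hx hm i).2).1


/-- relations between the convergents of `x` and of `ι(x)`
(`P̂_j(x) = P_j(ι x)`, `Q̂_j(x) = Q_j(ι x)`), and uniform comparability of
`Q̂_j` with `Q_j`. -/
theorem hat_convergent_relations :
    (∀ x ∈ Set.Ioo (0 : ℝ) 1, Irrational x → ∀ j : ℕ, 1 ≤ j →
      (((dig j x).s = Par.e →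
          Pc j (iota x) =
            (1/2) * (((dig j x).eps : ℝ) * (Qc (j-1) x - Pc (j-1) x) + (Qc j x - Pc j x)) ∧
          Qc j (iota x) =
            (1/2) * (((dig j x).eps : ℝ) * (Qc (j-1) x + Pc (j-1) x) + (Qc j x + Pc j x))) ∧
       ((dig j x).s = Par.o →
          Pc j x =
            (1/2) * (((dig j x).eps : ℝ) * (Qc (j-1) (iota x) - Pc (j-1) (iota x)) +
              (Qc j (iota x) - Pc j (iota x))) ∧
          Qc j x =
            (1/2) * (((dig j x).eps : ℝ) * (Qc (j-1) (iota x) + Pc (j-1) (iota x)) +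
              (Qc j (iota x) + Pc j (iota x)))))) ∧
    (∃ C : ℝ, 1 < C ∧ ∀ x ∈ Set.Ioo (0 : ℝ) 1, Irrational x → ∀ j : ℕ, 1 ≤ j →
      1 / C < Qc j (iota x) / Qc j x ∧ Qc j (iota x) / Qc j x < C) := by
  constructor
  · rintro x ⟨hx0, hx1⟩ hirr j hj
    obtain ⟨m, rfl⟩ : ∃ m, j = m + 1 := ⟨j - 1, by omega⟩
    simp only [Nat.add_sub_cancel]
    have hmem : x ∈ Set.Ioo (0:ℝ) 1 := ⟨hx0, hx1⟩
    have hg := iter_good hirr hmem m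
    have hdig : dig (m+1) x = digit (T^[m] x) := by simp [dig]
    have hM := Mn_conj hirr hmem (m+1)
    have e00 := congrFun (congrFun hM 0) 0
    have e01 := congrFun (congrFun hM 0) 1
    have e10 := congrFun (congrFun hM 1) 0
    have e11 := congrFun (congrFun hM 1) 1
    simp [Nmat, Matrix.mul_apply, Fin.sum_univ_two] at e00 e01 e10 e11
    rw [hdig]
    constructor
    · intro hse
      have hc0 : Mn (m+1) x 0 0 = ((digit (T^[m] x)).eps : ℝ) * Mn m x 0 1 := by
        rw [Mn_succ]; exact col0_e hse 0
      have hc1 : Mn (m+1) x 1 0 = ((digit (T^[m] x)).eps : ℝ) * Mn m x 1 1 := by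
        rw [Mn_succ]; exact col0_e hse 1
      constructor
      · simp only [Pc, Qc]
        nlinarith [e00, e01, hc0, hc1]
      · simp only [Pc, Qc]
        nlinarith [e10, e11, hc0, hc1]
    · intro hso
      have hιm := iota_mem_Ioo hmem
      have hιirr := iota_irrational hirr (by linarith)
      have hM' := Mn_conj hιirr hιm (m+1)
      rw [iota_iota (by linarith : (-1:ℝ) < x)] at hM'
      have f00 := congrFun (congrFun hM' 0) 0
      have f01 := congrFun (congrFun hM' 0) 1
      have f10 := congrFun (congrFun hM' 1) 0
      have f11 := congrFun (congrFun hM' 1) 1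
      simp [Nmat, Matrix.mul_apply, Fin.sum_univ_two] at f00 f01 f10 f11
      have hdι : digit (T^[m] (iota x)) = swap (digit (T^[m] x)) := by
        rw [iter_iota hirr hmem m, digit_iota hg.1 hg.2]
      obtain ⟨hse', heq⟩ := swap_of_o (digit_spec hg.1 hg.2).1 hso
      have hc0 : Mn (m+1) (iota x) 0 0 = ((digit (T^[m] x)).eps : ℝ) * Mn m (iota x) 0 1 := by
        rw [Mn_succ, hdι, ← heq]; exact col0_e hse' 0
      have hc1 : Mn (m+1) (iota x) 1 0 = ((digit (T^[m] x)).eps : ℝ) * Mn m (iota x) 1 1 := by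
        rw [Mn_succ, hdι, ← heq]; exact col0_e hse' 1
      constructor
      · simp only [Pc, Qc]
        nlinarith [f00, f01, hc0, hc1]
      · simp only [Pc, Qc]
        nlinarith [f10, f11, hc0, hc1]
  · refine ⟨3, by norm_num, ?_⟩
    rintro x ⟨hx0, hx1⟩ hirr j hj
    have hmem : x ∈ Set.Ioo (0:ℝ) 1 := ⟨hx0, hx1⟩
    have hιm := iota_mem_Ioo hmem
    have hιirr := iota_irrational hirr (by linarith)
    have hi1 : inv2 ((0:ℝ), (1:ℝ)) := ⟨by norm_num, by norm_num, by norm_num⟩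
    have hi2 : inv2 ((1:ℝ), (1:ℝ)) := ⟨by norm_num, by norm_num, by norm_num⟩
    have hi3 : inv2 ((-1:ℝ), (1:ℝ)) := ⟨by norm_num, by norm_num, by norm_num⟩
    have hu := inv2_Mn hirr hmem j hi1
    have hsrow := inv2_Mn hirr hmem j hi2
    have hdrow := inv2_Mn hirr hmem j hi3
    have hu' := inv2_Mn hιirr hιm j hi1
    have hsrow' := inv2_Mn hιirr hιm j hi2
    have hdrow' := inv2_Mn hιirr hιm j hi3
    simp [inv2, act] at hu hsrow hdrow hu' hsrow' hdrow'
    have hM := Mn_conj hirr hmem j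
    have hM' := Mn_conj hιirr hιm j
    rw [iota_iota (by linarith : (-1:ℝ) < x)] at hM'
    have e10 := congrFun (congrFun hM 1) 0
    have e11 := congrFun (congrFun hM 1) 1
    have f10 := congrFun (congrFun hM' 1) 0
    have f11 := congrFun (congrFun hM' 1) 1
    simp [Nmat, Matrix.mul_apply, Fin.sum_univ_two] at e10 e11 f10 f11
    simp only [Qc]
    have hQ : 0 < Mn j x 1 1 := by linarith [hu.1]
    have hQ' : 0 < Mn j (iota x) 1 1 := by linarith [hu'.1]
    have hub : Mn j (iota x) 1 1 < 3 * Mn j x 1 1 := by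
      linarith [hsrow.2.2, hdrow.1, e10, e11]
    have hlb : Mn j x 1 1 < 3 * Mn j (iota x) 1 1 := by
      linarith [hsrow'.2.2, hdrow'.1, f10, f11]
    constructor
    · rw [lt_div_iff₀ hQ]
      linarith
    · rw [div_lt_iff₀ hQ]
      linarith

end SCF
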